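/- Let G be a cubic simple graph on n vertices with girth at least 16 and let A be a MAI set of G. With B = V(G) \ A, let Y be the set of vertices of degree 1 in the induced subgraph G[A], let Z be the set of vertices of degree 1 in G[B], and set s = |Y|/2, t = |Z|/2, and i = n/2 − |A|. Then i ≥ 0 and t ≥ s. -/

import Mathlib

/-- A set of vertices is independent if its vertices are pairwise nonadjacent. -/
def IsIndep {V : Type*} (G : SimpleGraph V) (s : Set V) : Prop :=
  s.Pairwise fun u v => ¬ G.Adj u v

/-- The independence number of a graph: the largest size of an independent set. -/
noncomputable def indepNum {V : Type*} (G : SimpleGraph V) : ℕ :=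
  sSup {n | ∃ s : Set V, IsIndep G s ∧ s.ncard = n}

/-- A graph is cubic (3-regular) if every vertex has exactly three neighbors. -/
def IsCubic {V : Type*} (G : SimpleGraph V) : Prop :=
  ∀ v : V, (G.neighborSet v).ncard = 3

/-- `A` is an AI set (almost independent set) if the subgraph induced by `A` has maximum
degree at most 1, i.e. every vertex of `A` has at most one neighbor inside `A`. -/
def IsAI {V : Type*} (G : SimpleGraph V) (A : Set V) : Prop :=
  ∀ a ∈ A, ({b | b ∈ A ∧ G.Adj a b}).ncard ≤ 1

/-- `A` is a MAI set (maximum almost independent set) if `A` is an AI set containing an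
independent set of maximum size `α(G)`, and `A` is largest among such sets. -/
def IsMAI {V : Type*} (G : SimpleGraph V) (A : Set V) : Prop :=
  IsAI G A ∧ (∃ s ⊆ A, IsIndep G s ∧ s.ncard = indepNum G) ∧
    ∀ A' : Set V, IsAI G A' → (∃ s ⊆ A', IsIndep G s ∧ s.ncard = indepNum G) →
      A'.ncard ≤ A.ncard

open scoped Classical

namespace MAIaux

variable {V : Type*} [Fintype V] (G : SimpleGraph V)

/-- The set of degree-one vertices of the subgraph induced by `C`. -/
def Yset (C : Set V) : Set V := {a ∈ C | ({b | b ∈ C ∧ G.Adj a b}).ncard = 1}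

variable {G}

lemma eq_singleton_of_mem_of_ncard_le_one {s : Set V} {a : V} (ha : a ∈ s)
    (h : s.ncard ≤ 1) : s = {a} := by
  have h1 : 1 ≤ s.ncard := (Set.ncard_pos (Set.toFinite s)).mpr ⟨a, ha⟩
  obtain ⟨b, hb⟩ := Set.ncard_eq_one.mp (le_antisymm h h1)
  subst hb
  simp only [Set.mem_singleton_iff] at ha
  rw [ha]

lemma ncard_le_indepNum {s : Set V} (h : IsIndep G s) : s.ncard ≤ indepNum G := by
  apply le_csSup
  · refine ⟨Fintype.card V, ?_⟩
    rintro n ⟨t, _, rfl⟩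
    simpa [Set.ncard_univ, Nat.card_eq_fintype_card] using
      Set.ncard_le_ncard (Set.subset_univ t) Set.finite_univ
  · exact ⟨s, h, rfl⟩

/-- For an AI set `C` there is a set `R` of half the degree-one vertices containing
one endpoint of each induced edge. -/
lemma exists_half (C : Set V) (hC : IsAI G C) :
    ∃ R : Set V, R ⊆ Yset G C ∧ (Yset G C).ncard = 2 * R.ncard ∧
      (∀ u v, u ∈ C → v ∈ C → u ∉ R → v ∉ R → G.Adj u v → False) ∧
      (∀ S : Set V, IsIndep G S → (S ∩ Yset G C).ncard ≤ R.ncard) := by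
  set Y := Yset G C with hYdef
  have key : ∀ y ∈ Y, ∃ z, {b | b ∈ C ∧ G.Adj y b} = {z} := fun y hy =>
    Set.ncard_eq_one.mp hy.2
  choose! p hp using key
  have hpmem : ∀ y ∈ Y, p y ∈ C ∧ G.Adj y (p y) := by
    intro y hy
    have : p y ∈ {b | b ∈ C ∧ G.Adj y b} := by rw [hp y hy]; rfl
    exact this
  have hpY : ∀ y ∈ Y, p y ∈ Y := by
    intro y hy
    obtain ⟨hpC, hadj⟩ := hpmem y hy
    have hymem : y ∈ {b | b ∈ C ∧ G.Adj (p y) b} := ⟨hy.1, hadj.symm⟩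
    have := eq_singleton_of_mem_of_ncard_le_one hymem (hC (p y) hpC)
    exact ⟨hpC, by rw [this]; simp⟩
  have hNpy : ∀ y ∈ Y, {b | b ∈ C ∧ G.Adj (p y) b} = {y} := by
    intro y hy
    obtain ⟨hpC, hadj⟩ := hpmem y hy
    exact eq_singleton_of_mem_of_ncard_le_one ⟨hy.1, hadj.symm⟩ (hC (p y) hpC)
  have hpp : ∀ y ∈ Y, p (p y) = y := by
    intro y hy
    have h1 := hp (p y) (hpY y hy)
    rw [hNpy y hy] at h1
    exact (Set.singleton_eq_singleton_iff.mp h1.symm)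
  have hpne : ∀ y ∈ Y, p y ≠ y := fun y hy => (hpmem y hy).2.ne'
  -- a linear order to pick one endpoint of each edge
  let f : V → ℕ := fun v => (Fintype.equivFin V v : ℕ)
  have hf : Function.Injective f := fun a b h => by
    exact (Fintype.equivFin V).injective (Fin.ext h)
  refine ⟨{y ∈ Y | f y < f (p y)}, fun y hy => hy.1, ?_, ?_, ?_⟩
  · -- cardinality
    set R : Set V := {y ∈ Y | f y < f (p y)} with hRdef
    have horR : ∀ y ∈ Y, y ∈ R ∨ (p y ∈ R ∧ p (p y) = y) := by
      intro y hy
      rcases lt_or_gt_of_ne (fun h => hpne y hy (hf h).symm : f y ≠ f (p y)) with h | h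
      · exact Or.inl ⟨hy, h⟩
      · exact Or.inr ⟨⟨hpY y hy, by rw [hpp y hy]; exact h⟩, hpp y hy⟩
    have hYeq : Y = R ∪ p '' R := by
      apply Set.Subset.antisymm
      · intro y hy
        rcases horR y hy with h | ⟨h1, h2⟩
        · exact Or.inl h
        · exact Or.inr ⟨p y, h1, h2⟩
      · rintro y (hy | ⟨z, hz, rfl⟩)
        · exact hy.1
        · exact hpY z hz.1
    have hdisj : Disjoint R (p '' R) := by
      rw [Set.disjoint_left]
      rintro z hz ⟨w, hw, rfl⟩
      have h1 : f w < f (p w) := hw.2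
      have h2 : f (p w) < f (p (p w)) := hz.2
      rw [hpp w hw.1] at h2
      omega
    have hinj : Set.InjOn p R := by
      intro y hy z hz h
      have := hpp y hy.1
      rw [h, hpp z hz.1] at this
      exact this.symm
    rw [hYeq, Set.ncard_union_eq hdisj (Set.toFinite _) (Set.toFinite _),
      Set.ncard_image_of_injOn hinj]
    omega
  · -- no edge outside R
    intro u v hu hv huR hvR hadj
    have hvmem : v ∈ {b | b ∈ C ∧ G.Adj u b} := ⟨hv, hadj⟩
    have huY : u ∈ Y := ⟨hu, by
      rw [eq_singleton_of_mem_of_ncard_le_one hvmem (hC u hu)]; simp⟩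
    have hpu : p u = v := by
      have := hp u huY
      rw [eq_singleton_of_mem_of_ncard_le_one hvmem (hC u hu)] at this
      exact (Set.singleton_eq_singleton_iff.mp this.symm)
    rcases lt_or_gt_of_ne (fun h => hpne u huY (hf h).symm : f u ≠ f (p u)) with h | h
    · exact huR ⟨huY, h⟩
    · refine hvR ?_
      rw [← hpu]
      exact ⟨hpY u huY, by rw [hpp u huY]; exact h⟩
  · -- injection from S ∩ Y
    intro S hS
    set R : Set V := {y ∈ Y | f y < f (p y)} with hRdef
    set g : V → V := fun y => if f y < f (p y) then y else p y with hgdef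
    have hgR : ∀ y ∈ S ∩ Y, g y ∈ R := by
      rintro y ⟨hyS, hyY⟩
      by_cases h : f y < f (p y)
      · simpa [hgdef, h] using ⟨hyY, h⟩
      · have hne : f y ≠ f (p y) := fun hh => hpne y hyY (hf hh).symm
        have h2 : f (p y) < f y := by omega
        simp only [hgdef, h, if_false]
        exact ⟨hpY y hyY, by rw [hpp y hyY]; exact h2⟩
    have hginj : Set.InjOn g (S ∩ Y) := by
      rintro y ⟨hyS, hyY⟩ z ⟨hzS, hzY⟩ h
      by_cases hy : f y < f (p y) <;> by_cases hz : f z < f (p z) <;>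
        simp only [hgdef, hy, hz, if_true, if_false] at h
      · exact h
      · -- y = p z
        exfalso
        by_cases hyz : y = z
        · subst hyz; exact hpne y hyY h.symm
        · exact hS hzS hyS (Ne.symm hyz) (h ▸ (hpmem z hzY).2)
      · exfalso
        by_cases hyz : y = z
        · subst hyz; exact hpne y hyY h
        · exact hS hyS hzS hyz (h ▸ (hpmem y hyY).2)
      · rw [← hpp y hyY, h, hpp z hzY]
    calc (S ∩ Y).ncard = (g '' (S ∩ Y)).ncard := (Set.ncard_image_of_injOn hginj).symm
      _ ≤ R.ncard := Set.ncard_le_ncard (Set.image_subset_iff.mpr hgR) (Set.toFinite _)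

/-- Potential bound: any AI set has `2|C| ≤ 2α + |Y_C|`. -/
lemma pot {C : Set V} (hC : IsAI G C) :
    2 * C.ncard ≤ 2 * indepNum G + (Yset G C).ncard := by
  obtain ⟨R, hRY, hcard, hnoedge, -⟩ := exists_half C hC
  have hRC : R ⊆ C := fun y hy => (hRY hy).1
  have hW : IsIndep G (C \ R) := by
    intro u hu v hv hne hadj
    exact hnoedge u v hu.1 hv.1 hu.2 hv.2 hadj
  have h1 : (C \ R).ncard + R.ncard = C.ncard :=
    Set.ncard_diff_add_ncard_of_subset hRC (Set.toFinite _)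
  have h2 : (C \ R).ncard ≤ indepNum G := ncard_le_indepNum hW
  omega

/-- Reverse bound for sets containing an independent set. -/
lemma half {C S : Set V} (hC : IsAI G C) (hS : IsIndep G S) (hSC : S ⊆ C) :
    2 * S.ncard + (Yset G C).ncard ≤ 2 * C.ncard := by
  obtain ⟨R, hRY, hcard, -, hinj⟩ := exists_half C hC
  have hYC : Yset G C ⊆ C := fun y hy => hy.1
  have h1 : (S ∩ Yset G C).ncard + (S \ Yset G C).ncard = S.ncard :=
    Set.ncard_inter_add_ncard_diff_eq_ncard S (Yset G C) (Set.toFinite _)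
  have h2 : (S \ Yset G C).ncard ≤ (C \ Yset G C).ncard :=
    Set.ncard_le_ncard (fun x hx => ⟨hSC hx.1, hx.2⟩) (Set.toFinite _)
  have h3 : (C \ Yset G C).ncard + (Yset G C).ncard = C.ncard :=
    Set.ncard_diff_add_ncard_of_subset hYC (Set.toFinite _)
  have h4 := hinj S hS
  omega

end MAIaux

namespace MAIaux

variable {V : Type*} [Fintype V] {G : SimpleGraph V}

/-- Every vertex outside a MAI set of a cubic graph has at least two neighbors inside. -/
lemma two_le_nbrs_of_mai (_hcubic : IsCubic G) {A : Set V} (hA : IsMAI G A)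
    (htight : 2 * A.ncard = 2 * indepNum G + (Yset G A).ncard) :
    ∀ v ∈ Aᶜ, 2 ≤ ({b | b ∈ A ∧ G.Adj v b}).ncard := by
  obtain ⟨hAI, ⟨S, hSA, hSind, hScard⟩, hmax⟩ := hA
  intro v hv
  have hvA : v ∉ A := hv
  by_contra hcon
  push_neg at hcon
  have hcon2 : ({b | b ∈ A ∧ G.Adj v b}).ncard ≤ 1 := by omega
  rcases Nat.le_one_iff_eq_zero_or_eq_one.mp hcon2 with hN | hN
  · -- no neighbor in A : insert v A beats A
    have hNe0 : {b | b ∈ A ∧ G.Adj v b} = ∅ := by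
      rwa [Set.ncard_eq_zero (Set.toFinite _)] at hN
    have hNe : ∀ b : V, ¬ (b ∈ A ∧ G.Adj v b) := Set.eq_empty_iff_forall_notMem.mp hNe0
    have hAI' : IsAI G (insert v A) := by
      intro x hx
      rcases Set.mem_insert_iff.mp hx with hxv | hxA
      · rw [hxv]
        have : {b | b ∈ insert v A ∧ G.Adj v b} = ∅ := by
          apply Set.eq_empty_iff_forall_notMem.mpr
          rintro b ⟨(rfl | hbA), hadj⟩
          · exact G.irrefl hadj
          · exact hNe b ⟨hbA, hadj⟩
        rw [this]; simp
      · have heq : {b | b ∈ insert v A ∧ G.Adj x b} = {b | b ∈ A ∧ G.Adj x b} := by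
          ext b
          constructor
          · rintro ⟨(rfl | hbA), hadj⟩
            · exact absurd ⟨hxA, hadj.symm⟩ (hNe x)
            · exact ⟨hbA, hadj⟩
          · rintro ⟨hbA, hadj⟩
            exact ⟨Or.inr hbA, hadj⟩
        rw [heq]
        exact hAI x hxA
    have hle := hmax (insert v A) hAI' ⟨S, hSA.trans (Set.subset_insert _ _), hSind, hScard⟩
    rw [Set.ncard_insert_of_notMem hvA (Set.toFinite _)] at hle
    omega
  · -- exactly one neighbor a₀ in A
    obtain ⟨a₀, hNa₀⟩ := Set.ncard_eq_one.mp hN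
    have ha₀ : a₀ ∈ A ∧ G.Adj v a₀ := by
      have : a₀ ∈ {b | b ∈ A ∧ G.Adj v b} := by rw [hNa₀]; rfl
      exact this
    have hmem : ∀ x ∈ A, G.Adj v x → x = a₀ := by
      intro x hx hadj
      have : x ∈ {b | b ∈ A ∧ G.Adj v b} := ⟨hx, hadj⟩
      rwa [hNa₀, Set.mem_singleton_iff] at this
    rcases Nat.le_one_iff_eq_zero_or_eq_one.mp (hAI a₀ ha₀.1) with h0 | h1
    · -- a₀ isolated in A : insert v A beats A
      have hNe0 : {b | b ∈ A ∧ G.Adj a₀ b} = ∅ := by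
        rwa [Set.ncard_eq_zero (Set.toFinite _)] at h0
      have hNe : ∀ b : V, ¬ (b ∈ A ∧ G.Adj a₀ b) := Set.eq_empty_iff_forall_notMem.mp hNe0
      have hAI' : IsAI G (insert v A) := by
        intro x hx
        rcases Set.mem_insert_iff.mp hx with hxv | hxA
        · rw [hxv]
          have : {b | b ∈ insert v A ∧ G.Adj v b} = {a₀} := by
            ext b
            constructor
            · rintro ⟨(rfl | hbA), hadj⟩
              · exact absurd hadj (G.irrefl)
              · exact hmem b hbA hadj
            · rintro rfl
              exact ⟨Or.inr ha₀.1, ha₀.2⟩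
          rw [this, Set.ncard_singleton]
        · by_cases hxa₀ : x = a₀
          · subst hxa₀
            have : {b | b ∈ insert v A ∧ G.Adj x b} = {v} := by
              ext b
              constructor
              · rintro ⟨(rfl | hbA), hadj⟩
                · rfl
                · exact absurd ⟨hbA, hadj⟩ (hNe b)
              · rintro rfl
                exact ⟨Or.inl rfl, ha₀.2.symm⟩
            rw [this, Set.ncard_singleton]
          · have heq : {b | b ∈ insert v A ∧ G.Adj x b} = {b | b ∈ A ∧ G.Adj x b} := by
              ext b
              constructor
              · rintro ⟨(rfl | hbA), hadj⟩
                · exact absurd (hmem x hxA hadj.symm) hxa₀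
                · exact ⟨hbA, hadj⟩
              · rintro ⟨hbA, hadj⟩
                exact ⟨Or.inr hbA, hadj⟩
            rw [heq]
            exact hAI x hxA
      have hle := hmax (insert v A) hAI' ⟨S, hSA.trans (Set.subset_insert _ _), hSind, hScard⟩
      rw [Set.ncard_insert_of_notMem hvA (Set.toFinite _)] at hle
      omega
    · -- a₀ matched to a₁ in A : swap a₀ for v and lose an edge
      obtain ⟨a₁, hNa₁⟩ := Set.ncard_eq_one.mp h1
      have ha₁ : a₁ ∈ A ∧ G.Adj a₀ a₁ := by
        have : a₁ ∈ {b | b ∈ A ∧ G.Adj a₀ b} := by rw [hNa₁]; rfl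
        exact this
      have hne : a₀ ≠ a₁ := ha₁.2.ne
      have hNa₁' : {b | b ∈ A ∧ G.Adj a₁ b} = {a₀} :=
        eq_singleton_of_mem_of_ncard_le_one ⟨ha₀.1, ha₁.2.symm⟩ (hAI a₁ ha₁.1)
      have hva₁ : ¬ G.Adj v a₁ := fun h => hne (hmem a₁ ha₁.1 h).symm
      set A₁ : Set V := insert v (A \ {a₀}) with hA₁def
      have hvnot : v ∉ A \ {a₀} := fun h => hvA h.1
      have hNv₁ : {b | b ∈ A₁ ∧ G.Adj v b} = ∅ := by
        apply Set.eq_empty_iff_forall_notMem.mpr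
        rintro b ⟨(rfl | hbA), hadj⟩
        · exact G.irrefl hadj
        · exact hbA.2 (hmem b hbA.1 hadj)
      have hsub₁ : ∀ x ∈ A \ {a₀}, {b | b ∈ A₁ ∧ G.Adj x b} ⊆ {b | b ∈ A ∧ G.Adj x b} := by
        rintro x hx b ⟨(rfl | hbA), hadj⟩
        · exact absurd (hmem x hx.1 hadj.symm) hx.2
        · exact ⟨hbA.1, hadj⟩
      have hAI₁ : IsAI G A₁ := by
        intro x hx
        rcases Set.mem_insert_iff.mp hx with hxv | hxA
        · rw [hxv, hNv₁]; simp
        · exact le_trans (Set.ncard_le_ncard (hsub₁ x hxA) (Set.toFinite _)) (hAI x hxA.1)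
      have hcard₁ : A₁.ncard = A.ncard := by
        rw [hA₁def, Set.ncard_insert_of_notMem hvnot (Set.toFinite _)]
        have := Set.ncard_diff_singleton_add_one ha₀.1 (Set.toFinite A)
        omega
      have hYsub : Yset G A₁ ⊆ Yset G A \ {a₀, a₁} := by
        rintro x ⟨hxA₁, hx1⟩
        rcases Set.mem_insert_iff.mp hxA₁ with hxv | hxA
        · rw [hxv, hNv₁] at hx1; simp at hx1
        · have hxa₁ : x ≠ a₁ := by
            rintro rfl
            have : {b | b ∈ A₁ ∧ G.Adj x b} = ∅ := by
              apply Set.eq_empty_iff_forall_notMem.mpr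
              rintro b ⟨(rfl | hbA), hadj⟩
              · exact hva₁ hadj.symm
              · exact hbA.2 (by
                  have : b ∈ {b | b ∈ A ∧ G.Adj x b} := ⟨hbA.1, hadj⟩
                  rwa [hNa₁', Set.mem_singleton_iff] at this)
            rw [this] at hx1; simp at hx1
          have hxY : x ∈ Yset G A := by
            refine ⟨hxA.1, ?_⟩
            have hpos : 0 < ({b | b ∈ A ∧ G.Adj x b}).ncard := by
              have hne' : ({b | b ∈ A₁ ∧ G.Adj x b}).Nonempty := by
                rw [← Set.ncard_pos (Set.toFinite _), hx1]; omega
              obtain ⟨b, hb⟩ := hne'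
              exact (Set.ncard_pos (Set.toFinite _)).mpr ⟨b, hsub₁ x hxA hb⟩
            have := hAI x hxA.1
            omega
          have hxa₀ : x ≠ a₀ := fun h => hxA.2 (h ▸ rfl)
          refine ⟨hxY, ?_⟩
          simp only [Set.mem_insert_iff, Set.mem_singleton_iff]
          push_neg
          exact ⟨hxa₀, hxa₁⟩
      have ha₀Y : a₀ ∈ Yset G A := ⟨ha₀.1, by rw [hNa₁, Set.ncard_singleton]⟩
      have ha₁Y : a₁ ∈ Yset G A := ⟨ha₁.1, by rw [hNa₁', Set.ncard_singleton]⟩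
      have hpsub : ({a₀, a₁} : Set V) ⊆ Yset G A := by
        rintro x (rfl | rfl)
        exacts [ha₀Y, ha₁Y]
      have hd : (Yset G A \ {a₀, a₁}).ncard + ({a₀, a₁} : Set V).ncard = (Yset G A).ncard :=
        Set.ncard_diff_add_ncard_of_subset hpsub (Set.toFinite _)
      have hp2 : ({a₀, a₁} : Set V).ncard = 2 := Set.ncard_pair hne
      have hpot := pot hAI₁
      have hmono := Set.ncard_le_ncard hYsub (Set.toFinite _)
      omega

lemma nd_split (hcubic : IsCubic G) (A : Set V) (x : V) :
    ({b | b ∈ A ∧ G.Adj x b}).ncard + ({b | b ∈ Aᶜ ∧ G.Adj x b}).ncard = 3 := by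
  have hdisj : Disjoint {b | b ∈ A ∧ G.Adj x b} {b | b ∈ Aᶜ ∧ G.Adj x b} := by
    rw [Set.disjoint_left]
    rintro b ⟨hbA, -⟩ ⟨hbA', -⟩
    exact hbA' hbA
  have hU : {b | b ∈ A ∧ G.Adj x b} ∪ {b | b ∈ Aᶜ ∧ G.Adj x b} = G.neighborSet x := by
    ext b
    by_cases hb : b ∈ A <;> simp [SimpleGraph.mem_neighborSet, hb]
  rw [← Set.ncard_union_eq hdisj (Set.toFinite _) (Set.toFinite _), hU, hcubic x]

open scoped Classical in
lemma sum_nd_eq_Ycard {C : Set V} (hC : IsAI G C) :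
    ∑ x ∈ (Set.toFinite C).toFinset, ({b | b ∈ C ∧ G.Adj x b}).ncard
      = (Yset G C).ncard := by
  set Cf := (Set.toFinite C).toFinset with hCf
  have hY : (Yset G C).ncard
      = (Cf.filter fun x => ({b | b ∈ C ∧ G.Adj x b}).ncard = 1).card := by
    rw [Set.ncard_eq_toFinset_card _ (Set.toFinite _)]
    apply congrArg Finset.card
    ext x
    simp [Yset, Set.Finite.mem_toFinset, hCf]
  rw [← Finset.sum_filter_add_sum_filter_not Cf
    (fun x => ({b | b ∈ C ∧ G.Adj x b}).ncard = 1)]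
  have h1 : ∑ x ∈ Cf.filter (fun x => ({b | b ∈ C ∧ G.Adj x b}).ncard = 1),
      ({b | b ∈ C ∧ G.Adj x b}).ncard
      = (Cf.filter fun x => ({b | b ∈ C ∧ G.Adj x b}).ncard = 1).card := by
    rw [Finset.card_eq_sum_ones]
    apply Finset.sum_congr rfl
    intro x hx
    exact (Finset.mem_filter.mp hx).2
  have h2 : ∑ x ∈ Cf.filter (fun x => ¬ ({b | b ∈ C ∧ G.Adj x b}).ncard = 1),
      ({b | b ∈ C ∧ G.Adj x b}).ncard = 0 := by
    apply Finset.sum_eq_zero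
    intro x hx
    obtain ⟨hxC, hx1⟩ := Finset.mem_filter.mp hx
    have := hC x (by rwa [Set.Finite.mem_toFinset] at hxC)
    omega
  rw [h1, h2, hY]
  omega

open scoped Classical in
lemma ncard_nbr_eq_sum (C : Set V) (x : V) :
    ({b | b ∈ C ∧ G.Adj x b}).ncard
      = ∑ y ∈ (Set.toFinite C).toFinset, if G.Adj x y then 1 else 0 := by
  rw [← Finset.card_filter]
  rw [Set.ncard_eq_toFinset_card _ (Set.toFinite _)]
  apply congrArg Finset.card
  ext b
  simp [Set.Finite.mem_toFinset]

lemma cut_comm (A : Set V) :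
    ∑ x ∈ (Set.toFinite A).toFinset, ({b | b ∈ Aᶜ ∧ G.Adj x b}).ncard
      = ∑ y ∈ (Set.toFinite Aᶜ).toFinset, ({b | b ∈ A ∧ G.Adj y b}).ncard := by
  classical
  simp_rw [ncard_nbr_eq_sum]
  rw [Finset.sum_comm]
  apply Finset.sum_congr rfl
  intro y _
  apply Finset.sum_congr rfl
  intro x _
  rw [G.adj_comm]

end MAIaux

/-- let `G` be a cubic graph on `n` vertices with girth at least 16 and `A` a MAI
set, `B = Aᶜ`, `Y` the degree-1 vertices of `G[A]`, `Z` the degree-1 vertices of `G[B]`,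
`s = |Y|/2`, `t = |Z|/2`, `i = n/2 − |A|`. Then `i ≥ 0` and `t ≥ s`. -/
theorem MAI_i_nonneg_t_ge_s {V : Type*} [Fintype V] (G : SimpleGraph V)
    (hcubic : IsCubic G) (hgirth : 16 ≤ G.egirth)
    (A : Set V) (hA : IsMAI G A) (Y Z : Set V)
    (hY : Y = {a ∈ A | ({b | b ∈ A ∧ G.Adj a b}).ncard = 1})
    (hZ : Z = {a ∈ Aᶜ | ({b | b ∈ Aᶜ ∧ G.Adj a b}).ncard = 1})
    (s t i : ℝ) (hs : 2 * s = (Y.ncard : ℝ)) (ht : 2 * t = (Z.ncard : ℝ))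
    (hi : i = (Fintype.card V : ℝ) / 2 - (A.ncard : ℝ)) :
    0 ≤ i ∧ s ≤ t := by
  classical
  obtain ⟨hAI, ⟨S, hSA, hSind, hScard⟩, hmax⟩ := hA
  have hYY : Y = MAIaux.Yset G A := hY
  have hZZ : Z = MAIaux.Yset G Aᶜ := hZ
  -- tightness for A
  have htight : 2 * A.ncard = 2 * indepNum G + (MAIaux.Yset G A).ncard := by
    have h1 := MAIaux.pot hAI
    have h2 := MAIaux.half hAI hSind hSA
    omega
  -- B is an AI set
  have hBge2 := MAIaux.two_le_nbrs_of_mai hcubic ⟨hAI, ⟨S, hSA, hSind, hScard⟩, hmax⟩ htight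
  have hBAI : IsAI G Aᶜ := by
    intro x hx
    have h3 := MAIaux.nd_split hcubic A x
    have h2 := hBge2 x hx
    omega
  -- counting across the cut
  set Af := (Set.toFinite A).toFinset with hAf
  set Bf := (Set.toFinite Aᶜ).toFinset with hBf
  have hacard : A.ncard = Af.card := Set.ncard_eq_toFinset_card _ _
  have hbcard : Aᶜ.ncard = Bf.card := Set.ncard_eq_toFinset_card _ _
  set E : ℕ := ∑ x ∈ Af, ({b | b ∈ Aᶜ ∧ G.Adj x b}).ncard with hE
  have h₁ : 3 * A.ncard = (MAIaux.Yset G A).ncard + E := by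
    calc 3 * A.ncard = ∑ _x ∈ Af, 3 := by
          rw [Finset.sum_const, smul_eq_mul, hacard, mul_comm]
      _ = ∑ x ∈ Af, (({b | b ∈ A ∧ G.Adj x b}).ncard + ({b | b ∈ Aᶜ ∧ G.Adj x b}).ncard) :=
          Finset.sum_congr rfl fun x _ => (MAIaux.nd_split hcubic A x).symm
      _ = (∑ x ∈ Af, ({b | b ∈ A ∧ G.Adj x b}).ncard) + E := Finset.sum_add_distrib
      _ = (MAIaux.Yset G A).ncard + E := by rw [MAIaux.sum_nd_eq_Ycard hAI]
  have h₂ : 3 * Aᶜ.ncard = (MAIaux.Yset G Aᶜ).ncard + E := by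
    calc 3 * Aᶜ.ncard = ∑ _x ∈ Bf, 3 := by
          rw [Finset.sum_const, smul_eq_mul, hbcard, mul_comm]
      _ = ∑ y ∈ Bf, (({b | b ∈ Aᶜ ∧ G.Adj y b}).ncard + ({b | b ∈ A ∧ G.Adj y b}).ncard) := by
          refine Finset.sum_congr rfl fun y _ => ?_
          have := MAIaux.nd_split hcubic A y
          omega
      _ = (∑ y ∈ Bf, ({b | b ∈ Aᶜ ∧ G.Adj y b}).ncard)
            + ∑ y ∈ Bf, ({b | b ∈ A ∧ G.Adj y b}).ncard := Finset.sum_add_distrib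
      _ = (MAIaux.Yset G Aᶜ).ncard + E := by
          rw [MAIaux.sum_nd_eq_Ycard hBAI, hE, MAIaux.cut_comm A]
  -- potential bound for B
  have hBpot : 2 * Aᶜ.ncard ≤ 2 * indepNum G + (MAIaux.Yset G Aᶜ).ncard := MAIaux.pot hBAI
  have hn : A.ncard + Aᶜ.ncard = Fintype.card V := by
    rw [← Nat.card_eq_fintype_card]
    exact Set.ncard_add_ncard_compl A
  -- the two natural-number conclusions
  have hab : A.ncard ≤ Aᶜ.ncard := by omega
  have hYZ : (MAIaux.Yset G A).ncard ≤ (MAIaux.Yset G Aᶜ).ncard := by omega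
  constructor
  · rw [hi]
    have h1 : (A.ncard : ℝ) ≤ (Aᶜ.ncard : ℝ) := Nat.cast_le.mpr hab
    have h2 : (Fintype.card V : ℝ) = (A.ncard : ℝ) + (Aᶜ.ncard : ℝ) := by
      exact_mod_cast (congrArg (Nat.cast : ℕ → ℝ) hn).symm
    linarith
  · have h1 : (Y.ncard : ℝ) ≤ (Z.ncard : ℝ) := by
      rw [hYY, hZZ]
      exact Nat.cast_le.mpr hYZ
    linarith
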